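/- Let F : 2^U → 2^V be the map induced by a weighted matching instance (G = (U,V;E), w) in which all matchings have pairwise distinct weights. If U₂ ⊆ U₁ ⊆ U and |F(U₁)| = |U₁| (every vertex of U₁ is matched in the unique maximum-weight matching of G[U₁ ∪ V]), then |F(U₂)| = |U₂| (every vertex of U₂ is matched in the unique maximum-weight matching of G[U₂ ∪ V]). -/

import Mathlib

open scoped Classical

/-- `M` is a matching with edges inside the edge set `E`:
no two distinct edges of `M` share a left or a right endpoint. -/
def IsMatching {U V : Type*} (E M : Finset (U × V)) : Prop :=
  M ⊆ E ∧ ∀ e₁ ∈ M, ∀ e₂ ∈ M, (e₁.1 = e₂.1 ∨ e₁.2 = e₂.2) → e₁ = e₂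

/-- The edge set of the subgraph `G[U' ∪ V]` induced by deleting
the left vertices outside `U'` (and their incident edges). -/
noncomputable def restrictL {U V : Type*} (E : Finset (U × V)) (U' : Finset U) : Finset (U × V) :=
  E.filter (fun e => e.1 ∈ U')

/-- The weight of a matching: the sum of the weights of its edges. -/
noncomputable def mWeight {U V : Type*} (w : U × V → ℝ) (M : Finset (U × V)) : ℝ :=
  ∑ e ∈ M, w e

/-- `M` is a maximum-weight matching of the graph with edge set `E`. -/
def IsMaxMatching {U V : Type*} (E : Finset (U × V)) (w : U × V → ℝ)
    (M : Finset (U × V)) : Prop :=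
  IsMatching E M ∧ ∀ M' : Finset (U × V), IsMatching E M' → mWeight w M' ≤ mWeight w M

/-- All matchings of the graph with edge set `E` have pairwise distinct weights. -/
def DistinctWeights {U V : Type*} (E : Finset (U × V)) (w : U × V → ℝ) : Prop :=
  ∀ M₁ M₂ : Finset (U × V), IsMatching E M₁ → IsMatching E M₂ → M₁ ≠ M₂ →
    mWeight w M₁ ≠ mWeight w M₂

noncomputable def pickF {α : Type*} (s : Finset α) : Option α :=
  if h : s.Nonempty then some h.choose else none

lemma pickF_mem {α : Type*} {s : Finset α} {a : α} (h : pickF s = some a) : a ∈ s := by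
  unfold pickF at h
  split at h
  · next hne => cases h; exact hne.choose_spec
  · simp at h

lemma pickF_of_mem {α : Type*} {s : Finset α} {a : α} (h : a ∈ s) : ∃ b ∈ s, pickF s = some b := by
  unfold pickF
  have hne : s.Nonempty := ⟨a, h⟩
  rw [dif_pos hne]
  exact ⟨_, hne.choose_spec, rfl⟩

lemma pickF_none {α : Type*} {s : Finset α} (h : pickF s = none) {a : α} : a ∉ s := by
  unfold pickF at h
  split at h
  · simp at h
  · next hne => intro ha; exact hne ⟨a, ha⟩

lemma restrictL_mono {U V : Type*} (E : Finset (U × V)) {U₁ U₂ : Finset U} (h : U₂ ⊆ U₁) :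
    restrictL E U₂ ⊆ restrictL E U₁ := by
  intro e he
  simp only [restrictL, Finset.mem_filter] at he ⊢
  exact ⟨he.1, h he.2⟩

lemma mm_key {U V : Type*} [Fintype U] [Fintype V]
    (E : Finset (U × V)) (w : U × V → ℝ)
    (hdist : DistinctWeights E w)
    (U₁ U₂ : Finset U) (hsub : U₂ ⊆ U₁)
    (M₁ M₂ : Finset (U × V))
    (h₁ : IsMaxMatching (restrictL E U₁) w M₁)
    (h₂ : IsMaxMatching (restrictL E U₂) w M₂)
    (hsat : U₁ ⊆ M₁.image Prod.fst)
    {u : U} (hu : u ∈ U₂) : u ∈ M₂.image Prod.fst := by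
  by_contra hun
  -- basic matching facts
  have hM₁E : M₁ ⊆ restrictL E U₁ := h₁.1.1
  have hM₂E : M₂ ⊆ restrictL E U₂ := h₂.1.1
  have uniq1 := h₁.1.2
  have uniq2 := h₂.1.2
  -- partial matching functions
  set m1 : U → Option (U × V) := fun x => pickF (M₁.filter fun e => e.1 = x) with hm1def
  set m2 : V → Option (U × V) := fun v => pickF (M₂.filter fun e => e.2 = v) with hm2def
  have hm1some : ∀ {x e}, m1 x = some e → e ∈ M₁ ∧ e.1 = x := by
    intro x e h
    have := pickF_mem h
    simpa using this
  have hm2some : ∀ {v e}, m2 v = some e → e ∈ M₂ ∧ e.2 = v := by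
    intro v e h
    have := pickF_mem h
    simpa using this
  have hm1of : ∀ {e}, e ∈ M₁ → m1 e.1 = some e := by
    intro e he
    obtain ⟨b, hb, hpick⟩ := pickF_of_mem (s := M₁.filter fun e' => e'.1 = e.1)
      (by simp [he] : e ∈ _)
    simp only [Finset.mem_filter] at hb
    have : b = e := uniq1 b hb.1 e he (Or.inl (by rw [hb.2]))
    rw [this] at hpick
    exact hpick
  have hm2of : ∀ {e}, e ∈ M₂ → m2 e.2 = some e := by
    intro e he
    obtain ⟨b, hb, hpick⟩ := pickF_of_mem (s := M₂.filter fun e' => e'.2 = e.2)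
      (by simp [he] : e ∈ _)
    simp only [Finset.mem_filter] at hb
    have : b = e := uniq2 b hb.1 e he (Or.inr (by rw [hb.2]))
    rw [this] at hpick
    exact hpick
  have hm1U1 : ∀ x ∈ U₁, ∃ e, m1 x = some e ∧ e ∈ M₁ ∧ e.1 = x := by
    intro x hx
    obtain ⟨e, he, he1⟩ := Finset.mem_image.mp (hsat hx)
    subst he1
    exact ⟨e, hm1of he, he, rfl⟩
  have hm2noneF : ∀ {v}, m2 v = none → ∀ e ∈ M₂, e.2 ≠ v := by
    intro v h e he hv
    exact pickF_none h (by simp [he, hv] : e ∈ M₂.filter fun e' => e'.2 = v)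
  -- the step function of the alternating walk
  set hstep : U → Option U := fun x => (m1 x).bind fun e => (m2 e.2).map Prod.fst with hstepdef
  have hstep_some : ∀ {a c}, hstep a = some c →
      ∃ e e', m1 a = some e ∧ m2 e.2 = some e' ∧ e'.1 = c := by
    intro a c h
    simp only [hstepdef, Option.bind_eq_some_iff, Option.map_eq_some_iff] at h
    obtain ⟨e, he, e', he', hc⟩ := h
    exact ⟨e, e', he, he', hc⟩
  have hstep_mem : ∀ {a c}, hstep a = some c → c ∈ U₂ := by
    intro a c h
    obtain ⟨e, e', _, he', hc⟩ := hstep_some h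
    have := hM₂E (hm2some he').1
    simp only [restrictL, Finset.mem_filter] at this
    rw [← hc]; exact this.2
  have hstep_ne_u : ∀ {a}, hstep a ≠ some u := by
    intro a h
    obtain ⟨e, e', _, he', hc⟩ := hstep_some h
    exact hun (Finset.mem_image.mpr ⟨e', (hm2some he').1, hc⟩)
  have hstep_backinj : ∀ {a b c}, hstep a = some c → hstep b = some c → a = b := by
    intro a b c ha hb
    obtain ⟨ea, ea', hea, hea', hca⟩ := hstep_some ha
    obtain ⟨eb, eb', heb, heb', hcb⟩ := hstep_some hb
    have heq' : ea' = eb' :=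
      uniq2 ea' (hm2some hea').1 eb' (hm2some heb').1 (Or.inl (hca.trans hcb.symm))
    have h2a := (hm2some hea').2
    have h2b := (hm2some heb').2
    have hsnd : ea.2 = eb.2 := by rw [← h2a, heq', h2b]
    have heq : ea = eb :=
      uniq1 ea (hm1some hea).1 eb (hm1some heb).1 (Or.inr hsnd)
    rw [← (hm1some hea).2, heq, (hm1some heb).2]
  -- the walk
  set us : ℕ → Option U := fun n => Nat.rec (some u) (fun _ ih => Option.bind ih hstep) n
    with husdef
  have hus0 : us 0 = some u := rfl
  have husS : ∀ n, us (n + 1) = (us n).bind hstep := fun n => rfl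
  have us_mem : ∀ n x, us n = some x → x ∈ U₂ := by
    intro n
    induction n with
    | zero => intro x h; rw [hus0] at h; cases h; exact hu
    | succ n ih =>
      intro x h
      rw [husS, Option.bind_eq_some_iff] at h
      obtain ⟨a, _, ha⟩ := h
      exact hstep_mem ha
  have us_inj : ∀ m n x, us m = some x → us n = some x → m = n := by
    intro m
    induction m with
    | zero =>
      intro n x h0 hn
      cases n with
      | zero => rfl
      | succ n' =>
        exfalso
        rw [hus0] at h0; cases h0
        rw [husS, Option.bind_eq_some_iff] at hn
        obtain ⟨a, _, ha⟩ := hn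
        exact hstep_ne_u ha
    | succ m' ih =>
      intro n x hm hn
      cases n with
      | zero =>
        exfalso
        rw [hus0] at hn; cases hn
        rw [husS, Option.bind_eq_some_iff] at hm
        obtain ⟨a, _, ha⟩ := hm
        exact hstep_ne_u ha
      | succ n' =>
        rw [husS, Option.bind_eq_some_iff] at hm hn
        obtain ⟨a, hma, ha⟩ := hm
        obtain ⟨b, hnb, hb⟩ := hn
        have hab : a = b := hstep_backinj ha hb
        rw [hab] at hma
        rw [ih n' b hma hnb]
  have us_mono : ∀ n x, us n = some x → ∀ m ≤ n, ∃ y, us m = some y := by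
    intro n
    induction n with
    | zero => intro x h m hm; interval_cases m; exact ⟨_, h⟩
    | succ n ih =>
      intro x h m hm
      rw [husS, Option.bind_eq_some_iff] at h
      obtain ⟨a, hna, hax⟩ := h
      rcases Nat.lt_or_ge m (n+1) with h' | h'
      · exact ih a hna m (Nat.lt_succ_iff.mp h')
      · have : m = n + 1 := le_antisymm hm h'
        subst this
        exact ⟨x, by rw [husS, hna]; simpa using hax⟩
  -- the walk terminates
  have hterm : ∃ n, us n = none := by
    by_contra hall
    push_neg at hall
    have hall' : ∀ n, ∃ x, us n = some x := by
      intro n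
      cases h : us n with
      | none => exact absurd h (hall n)
      | some x => exact ⟨x, rfl⟩
    choose f hf using hall'
    have hinj : Function.Injective f := by
      intro a b hab
      exact us_inj a b (f b) (hab ▸ hf a) (hf b)
    obtain ⟨a, b, hab, hfab⟩ := Finite.exists_ne_map_eq_of_infinite f
    exact hab (hinj hfab)
  set N := Nat.find hterm with hNdef
  have hN : us N = none := Nat.find_spec hterm
  have hNpos : N ≠ 0 := by
    intro h
    rw [h, hus0] at hN
    cases hN
  obtain ⟨k, hk⟩ : ∃ k, N = k + 1 := ⟨N - 1, (Nat.succ_pred_eq_of_ne_zero hNpos).symm⟩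
  obtain ⟨yk, hyk⟩ : ∃ y, us k = some y := by
    have hlt : k < N := by omega
    cases h : us k with
    | none => exact absurd h (Nat.find_min hterm hlt)
    | some y => exact ⟨y, rfl⟩
  -- default edge
  obtain ⟨e₀, he₀, he₀M, _⟩ := hm1U1 u (hsub hu)
  -- the explicit vertex / edge sequences
  set uu : ℕ → U := fun i => (us i).getD u with huudef
  have huu : ∀ i ≤ k, us i = some (uu i) := by
    intro i hi
    obtain ⟨y, hy⟩ := us_mono k yk hyk i hi
    rw [hy]
    simp [huudef, hy]
  have huumem : ∀ i ≤ k, uu i ∈ U₂ := fun i hi => us_mem i _ (huu i hi)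
  have huuinj : ∀ i ≤ k, ∀ j ≤ k, uu i = uu j → i = j := by
    intro i hi j hj hij
    exact us_inj i j (uu j) (hij ▸ huu i hi) (huu j hj)
  have huu0 : uu 0 = u := by
    have h := huu 0 (Nat.zero_le k)
    rw [hus0] at h
    exact (Option.some_injective _ h).symm
  set ee : ℕ → U × V := fun i => (m1 (uu i)).getD e₀ with heedef
  have hee : ∀ i ≤ k, m1 (uu i) = some (ee i) ∧ ee i ∈ M₁ ∧ (ee i).1 = uu i := by
    intro i hi
    obtain ⟨e, hme, heM, he1⟩ := hm1U1 (uu i) (hsub (huumem i hi))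
    have hE : ee i = e := by simp [heedef, hme]
    rw [hE]
    exact ⟨hme, heM, he1⟩
  set eb : ℕ → U × V := fun i => (m2 (ee i).2).getD e₀ with hebdef
  have heb : ∀ i < k, m2 (ee i).2 = some (eb i) ∧ eb i ∈ M₂ ∧ (eb i).2 = (ee i).2 ∧
      (eb i).1 = uu (i + 1) := by
    intro i hi
    have h1 : us (i + 1) = some (uu (i + 1)) := huu (i + 1) hi
    rw [husS, huu i (le_of_lt hi)] at h1
    simp only [Option.bind_some] at h1
    obtain ⟨e, e', hme, hme', he'1⟩ := hstep_some h1
    have hEe : e = ee i := by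
      have := (hee i (le_of_lt hi)).1
      rw [this] at hme
      exact (Option.some_injective _ hme).symm
    subst hEe
    have hEb : eb i = e' := by simp [hebdef, hme']
    rw [hEb]
    exact ⟨hme', (hm2some hme').1, (hm2some hme').2, he'1⟩
  have hterm_k : ∀ e ∈ M₂, e.2 ≠ (ee k).2 := by
    have h1 : us (k + 1) = none := hk ▸ hN
    rw [husS, huu k le_rfl] at h1
    simp only [Option.bind_some] at h1
    have h2 : (m1 (uu k)).bind (fun e => (m2 e.2).map Prod.fst) = none := h1
    rw [(hee k le_rfl).1] at h2
    simp only [Option.bind_some, Option.map_eq_none_iff] at h2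
    exact hm2noneF h2
  -- the exchange sets
  set A : Finset (U × V) := (Finset.range (k + 1)).image ee with hAdef
  set B : Finset (U × V) := (Finset.range k).image eb with hBdef
  have hAmem : ∀ {e}, e ∈ A ↔ ∃ i ≤ k, ee i = e := by
    intro e
    simp [hAdef, Nat.lt_succ_iff]
  have hBmem : ∀ {e}, e ∈ B ↔ ∃ i < k, eb i = e := by
    intro e
    simp [hBdef]
  have hAsub : A ⊆ M₁ := by
    intro e he
    obtain ⟨i, hi, rfl⟩ := hAmem.mp he
    exact (hee i hi).2.1
  have hBsub : B ⊆ M₂ := by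
    intro e he
    obtain ⟨i, hi, rfl⟩ := hBmem.mp he
    exact (heb i hi).2.1
  have hAnotM₂ : ∀ e ∈ A, e ∉ M₂ := by
    intro e he heM₂
    obtain ⟨i, hi, rfl⟩ := hAmem.mp he
    rcases lt_or_eq_of_le hi with hik | rfl
    · have h1 := heb i hik
      have heq : eb i = ee i := uniq2 _ h1.2.1 _ heM₂ (Or.inr h1.2.2.1)
      have h2 : uu (i + 1) = uu i := by rw [← h1.2.2.2, heq, (hee i hi).2.2]
      have := huuinj (i + 1) hik i hi h2
      omega
    · exact hterm_k _ heM₂ rfl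
  have hBnotM₁ : ∀ e ∈ B, e ∉ M₁ := by
    intro e he heM₁
    obtain ⟨i, hi, rfl⟩ := hBmem.mp he
    have h1 := heb i hi
    have heq : eb i = ee i := uniq1 _ heM₁ _ (hee i (le_of_lt hi)).2.1 (Or.inr h1.2.2.1)
    have h2 : uu (i + 1) = uu i := by rw [← h1.2.2.2, heq, (hee i (le_of_lt hi)).2.2]
    have := huuinj (i + 1) hi i (le_of_lt hi) h2
    omega
  -- the swapped matchings and their weights
  have hdisj2 : Disjoint (M₂ \ B) A := by
    rw [Finset.disjoint_right]
    intro e he he'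
    exact hAnotM₂ e he (Finset.mem_sdiff.mp he').1
  have hdisj1 : Disjoint (M₁ \ A) B := by
    rw [Finset.disjoint_right]
    intro e he he'
    exact hBnotM₁ e he (Finset.mem_sdiff.mp he').1
  have hw2 : mWeight w ((M₂ \ B) ∪ A) = mWeight w M₂ - mWeight w B + mWeight w A := by
    unfold mWeight
    rw [Finset.sum_union hdisj2, Finset.sum_sdiff_eq_sub hBsub]
  have hw1 : mWeight w ((M₁ \ A) ∪ B) = mWeight w M₁ - mWeight w A + mWeight w B := by
    unfold mWeight
    rw [Finset.sum_union hdisj1, Finset.sum_sdiff_eq_sub hAsub]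
  -- mixed incidence impossibility for M₂'
  have hmix2 : ∀ e₁ ∈ M₂, e₁ ∉ B → ∀ i ≤ k, ¬(e₁.1 = (ee i).1 ∨ e₁.2 = (ee i).2) := by
    intro e₁ h1 h1B i hi hor
    rcases hor with h | h
    · rcases Nat.eq_zero_or_pos i with rfl | hipos
      · exact hun (Finset.mem_image.mpr ⟨e₁, h1, by rw [h, (hee 0 hi).2.2, huu0]⟩)
      · obtain ⟨j, rfl⟩ : ∃ j, i = j + 1 := ⟨i - 1, by omega⟩
        have hj : j < k := by omega
        have hb := heb j hj
        have heq : e₁ = eb j := uniq2 _ h1 _ hb.2.1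
          (Or.inl (by rw [h, (hee _ hi).2.2, ← hb.2.2.2]))
        exact h1B (by rw [heq]; exact hBmem.mpr ⟨j, hj, rfl⟩)
    · rcases lt_or_eq_of_le hi with hik | rfl
      · have hb := heb i hik
        have heq : e₁ = eb i := uniq2 _ h1 _ hb.2.1 (Or.inr (by rw [h, hb.2.2.1]))
        exact h1B (by rw [heq]; exact hBmem.mpr ⟨i, hik, rfl⟩)
      · exact hterm_k e₁ h1 h
  have hM₂' : IsMatching (restrictL E U₂) ((M₂ \ B) ∪ A) := by
    constructor
    · intro e he
      rcases Finset.mem_union.mp he with h | h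
      · exact hM₂E (Finset.mem_sdiff.mp h).1
      · obtain ⟨i, hi, rfl⟩ := hAmem.mp h
        have heE : ee i ∈ E := by
          have h' := hM₁E (hee i hi).2.1
          simp only [restrictL, Finset.mem_filter] at h'
          exact h'.1
        simp only [restrictL, Finset.mem_filter]
        exact ⟨heE, by rw [(hee i hi).2.2]; exact huumem i hi⟩
    · intro e₁ he₁ e₂ he₂ hor
      rcases Finset.mem_union.mp he₁ with h1 | h1 <;> rcases Finset.mem_union.mp he₂ with h2 | h2
      · exact uniq2 _ (Finset.mem_sdiff.mp h1).1 _ (Finset.mem_sdiff.mp h2).1 hor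
      · obtain ⟨i, hi, rfl⟩ := hAmem.mp h2
        exact absurd hor (hmix2 e₁ (Finset.mem_sdiff.mp h1).1 (Finset.mem_sdiff.mp h1).2 i hi)
      · obtain ⟨i, hi, rfl⟩ := hAmem.mp h1
        exact absurd (hor.imp Eq.symm Eq.symm)
          (hmix2 e₂ (Finset.mem_sdiff.mp h2).1 (Finset.mem_sdiff.mp h2).2 i hi)
      · obtain ⟨i, hi, rfl⟩ := hAmem.mp h1
        obtain ⟨j, hj, rfl⟩ := hAmem.mp h2
        exact uniq1 _ (hee i hi).2.1 _ (hee j hj).2.1 hor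
  have hEmatch : ∀ {M' : Finset (U × V)} {S : Finset U},
      IsMatching (restrictL E S) M' → IsMatching E M' := by
    intro M' S h
    exact ⟨fun e he => (Finset.mem_filter.mp (h.1 he)).1, h.2⟩
  have hne2 : (M₂ \ B) ∪ A ≠ M₂ := by
    intro h
    have h1 : ee k ∈ (M₂ \ B) ∪ A := Finset.mem_union_right _ (hAmem.mpr ⟨k, le_rfl, rfl⟩)
    rw [h] at h1
    exact hAnotM₂ (ee k) (hAmem.mpr ⟨k, le_rfl, rfl⟩) h1
  have hlt2 : mWeight w ((M₂ \ B) ∪ A) < mWeight w M₂ :=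
    lt_of_le_of_ne (h₂.2 _ hM₂') (hdist _ _ (hEmatch hM₂') (hEmatch h₂.1) hne2)
  have hAB : mWeight w A < mWeight w B := by
    rw [hw2] at hlt2
    linarith
  -- mixed incidence impossibility for M₁'
  have hmix1 : ∀ e₁ ∈ M₁, e₁ ∉ A → ∀ i < k, ¬(e₁.1 = (eb i).1 ∨ e₁.2 = (eb i).2) := by
    intro e₁ h1 h1A i hi hor
    have hb := heb i hi
    rcases hor with h | h
    · have h2 := hee (i + 1) hi
      have heq : e₁ = ee (i + 1) := uniq1 _ h1 _ h2.2.1 (Or.inl (by rw [h, hb.2.2.2, ← h2.2.2]))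
      exact h1A (by rw [heq]; exact hAmem.mpr ⟨i + 1, hi, rfl⟩)
    · have h2 := hee i (le_of_lt hi)
      have heq : e₁ = ee i := uniq1 _ h1 _ h2.2.1 (Or.inr (by rw [h, hb.2.2.1]))
      exact h1A (by rw [heq]; exact hAmem.mpr ⟨i, le_of_lt hi, rfl⟩)
  have hM₁' : IsMatching (restrictL E U₁) ((M₁ \ A) ∪ B) := by
    constructor
    · intro e he
      rcases Finset.mem_union.mp he with h | h
      · exact hM₁E (Finset.mem_sdiff.mp h).1
      · exact restrictL_mono E hsub (hM₂E (hBsub h))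
    · intro e₁ he₁ e₂ he₂ hor
      rcases Finset.mem_union.mp he₁ with h1 | h1 <;> rcases Finset.mem_union.mp he₂ with h2 | h2
      · exact uniq1 _ (Finset.mem_sdiff.mp h1).1 _ (Finset.mem_sdiff.mp h2).1 hor
      · obtain ⟨i, hi, rfl⟩ := hBmem.mp h2
        exact absurd hor (hmix1 e₁ (Finset.mem_sdiff.mp h1).1 (Finset.mem_sdiff.mp h1).2 i hi)
      · obtain ⟨i, hi, rfl⟩ := hBmem.mp h1
        exact absurd (hor.imp Eq.symm Eq.symm)
          (hmix1 e₂ (Finset.mem_sdiff.mp h2).1 (Finset.mem_sdiff.mp h2).2 i hi)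
      · exact uniq2 _ (hBsub h1) _ (hBsub h2) hor
  have hle := h₁.2 _ hM₁'
  rw [hw1] at hle
  linarith

lemma matching_card_fst {U V : Type*} {E M : Finset (U × V)} (h : IsMatching E M) :
    (M.image Prod.fst).card = M.card :=
  Finset.card_image_of_injOn fun e₁ h₁ e₂ h₂ he => h.2 e₁ h₁ e₂ h₂ (Or.inl he)

lemma matching_card_snd {U V : Type*} {E M : Finset (U × V)} (h : IsMatching E M) :
    (M.image Prod.snd).card = M.card :=
  Finset.card_image_of_injOn fun e₁ h₁ e₂ h₂ he => h.2 e₁ h₁ e₂ h₂ (Or.inr he)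

lemma matching_fst_sub {U V : Type*} {E : Finset (U × V)} {U' : Finset U}
    {M : Finset (U × V)} (h : M ⊆ restrictL E U') : M.image Prod.fst ⊆ U' := by
  intro x hx
  obtain ⟨e, he, rfl⟩ := Finset.mem_image.mp hx
  have := h he
  simp only [restrictL, Finset.mem_filter] at this
  exact this.2

/-- If `U₂ ⊆ U₁ ⊆ U` and `|F(U₁)| = |U₁|` (every vertex of `U₁` is matched in
the unique maximum-weight matching of `G[U₁ ∪ V]`), then `|F(U₂)| = |U₂|`. -/
theorem mm_F_card {U V : Type*} [Fintype U] [Fintype V]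
    (E : Finset (U × V)) (w : U × V → ℝ)
    (hdist : DistinctWeights E w)
    (U₁ U₂ : Finset U) (hsub : U₂ ⊆ U₁)
    (M₁ M₂ : Finset (U × V))
    (h₁ : IsMaxMatching (restrictL E U₁) w M₁)
    (h₂ : IsMaxMatching (restrictL E U₂) w M₂)
    (hfull : (M₁.image Prod.snd).card = U₁.card) :
    (M₂.image Prod.snd).card = U₂.card := by
  have hsat : U₁ ⊆ M₁.image Prod.fst := by
    have heq : M₁.image Prod.fst = U₁ := by
      apply Finset.eq_of_subset_of_card_le (matching_fst_sub h₁.1.1)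
      rw [matching_card_fst h₁.1, ← matching_card_snd h₁.1, hfull]
    exact heq.symm.le
  have hsat2 : U₂ ⊆ M₂.image Prod.fst := fun u hu =>
    mm_key E w hdist U₁ U₂ hsub M₁ M₂ h₁ h₂ hsat hu
  have heq : M₂.image Prod.fst = U₂ :=
    Finset.eq_of_subset_of_card_le (matching_fst_sub h₂.1.1)
      (Finset.card_le_card hsat2)
  rw [matching_card_snd h₂.1, ← matching_card_fst h₂.1, heq]
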